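/- Let G be a finite connected graph and let M, H, H' be maximally intersecting matchings in G. On every maximal H-H' alternating chain with an even number of edges, the number of its edges lying in H ∩ M is at least the number of its edges lying in H' ∩ M. -/

import Mathlib

variable {V : Type*}

/-- A matching of `G`, given as a set of edges: a set of edges of `G` that are
pairwise non-adjacent (no two distinct edges share a vertex). -/
def IsMatchingSet (G : SimpleGraph V) (M : Set (Sym2 V)) : Prop :=
  M ⊆ G.edgeSet ∧ ∀ e ∈ M, ∀ f ∈ M, e ≠ f → ∀ v : V, ¬(v ∈ e ∧ v ∈ f)

/-- ν(G): the maximum size of a matching of `G`. -/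
noncomputable def matchingNumber (G : SimpleGraph V) : ℕ :=
  sSup {n | ∃ M : Set (Sym2 V), IsMatchingSet G M ∧ M.ncard = n}

/-- λ(G): the maximum of |H| + |H'| over pairs (H, H') of disjoint matchings of `G`. -/
noncomputable def lambdaParam (G : SimpleGraph V) : ℕ :=
  sSup {n | ∃ H H' : Set (Sym2 V), IsMatchingSet G H ∧ IsMatchingSet G H' ∧
    Disjoint H H' ∧ H.ncard + H'.ncard = n}

/-- μ(G): the maximum of |H| over pairs (H, H') of disjoint matchings of `G` with
|H| + |H'| = λ(G). -/
noncomputable def muParam (G : SimpleGraph V) : ℕ :=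
  sSup {n | ∃ H H' : Set (Sym2 V), IsMatchingSet G H ∧ IsMatchingSet G H' ∧
    Disjoint H H' ∧ H.ncard + H'.ncard = lambdaParam G ∧ H.ncard = n}

/-- A list of edges alternately lies in `A ∖ B` and `B ∖ A`. -/
def AltList (A B : Set (Sym2 V)) (l : List (Sym2 V)) : Prop :=
  (∀ e ∈ l, (e ∈ A ∧ e ∉ B) ∨ (e ∈ B ∧ e ∉ A)) ∧
  List.Chain' (fun e f => ¬(e ∈ A ↔ f ∈ A)) l

/-- An `A`-`B` alternating path in `G`: a (nontrivial) path whose edges alternately lie in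
`A ∖ B` and `B ∖ A`. -/
def IsAltPath (G : SimpleGraph V) (A B : Set (Sym2 V)) {u v : V} (p : G.Walk u v) : Prop :=
  0 < p.length ∧ p.IsPath ∧ AltList A B p.edges

/-- A maximal `A`-`B` alternating path: an alternating path that cannot be extended to a
longer alternating path at either of its ends. -/
def IsMaxAltPath (G : SimpleGraph V) (A B : Set (Sym2 V)) {u v : V} (p : G.Walk u v) : Prop :=
  IsAltPath G A B p ∧
  (∀ w, ∀ h : G.Adj w u, ¬ IsAltPath G A B (SimpleGraph.Walk.cons h p)) ∧
  (∀ w, ∀ h : G.Adj w v, ¬ IsAltPath G A B (SimpleGraph.Walk.cons h p.reverse))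

/-- `M` is a maximum matching of `G`. -/
def IsMaxMatching (G : SimpleGraph V) (M : Set (Sym2 V)) : Prop :=
  IsMatchingSet G M ∧ ∀ M' : Set (Sym2 V), IsMatchingSet G M' → M'.ncard ≤ M.ncard

/-- `(H, H')` is a pair of disjoint matchings of `G` with `|H| + |H'| = λ(G)` and
`|H| = μ(G)`. -/
def IsLambdaMuPair (G : SimpleGraph V) (H H' : Set (Sym2 V)) : Prop :=
  IsMatchingSet G H ∧ IsMatchingSet G H' ∧ Disjoint H H' ∧
  H.ncard + H'.ncard = lambdaParam G ∧ H.ncard = muParam G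

/-- The matchings `M`, `H`, `H'` are maximally intersecting:
(i) `M` is a maximum matching; (ii) `(H, H') ∈ Λ(G)` with `|H| = μ(G)`;
(iii) `|M ∩ (H ∪ H')|` is maximum among all such triples;
(iv) `|M ∩ H|` is maximum among all such triples also satisfying (iii). -/
def MaxIntersecting (G : SimpleGraph V) (M H H' : Set (Sym2 V)) : Prop :=
  IsMaxMatching G M ∧ IsLambdaMuPair G H H' ∧
  (∀ M₂ H₂ H₂' : Set (Sym2 V), IsMaxMatching G M₂ → IsLambdaMuPair G H₂ H₂' →
    (M₂ ∩ (H₂ ∪ H₂')).ncard ≤ (M ∩ (H ∪ H')).ncard) ∧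
  (∀ M₂ H₂ H₂' : Set (Sym2 V), IsMaxMatching G M₂ → IsLambdaMuPair G H₂ H₂' →
    (M₂ ∩ (H₂ ∪ H₂')).ncard = (M ∩ (H ∪ H')).ncard → (M₂ ∩ H₂).ncard ≤ (M ∩ H).ncard)


section Helpers
open SimpleGraph


section ListLemmas
variable {A B : Set (Sym2 V)}

lemma chain'_alt_swap : ∀ (l : List (Sym2 V)),
    (∀ e ∈ l, (e ∈ A ∧ e ∉ B) ∨ (e ∈ B ∧ e ∉ A)) →
    List.Chain' (fun e f => ¬(e ∈ A ↔ f ∈ A)) l →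
    List.Chain' (fun e f => ¬(e ∈ B ↔ f ∈ B)) l
  | [], _, _ => List.isChain_nil
  | [a], _, _ => List.isChain_singleton a
  | a :: b :: t, h1, hc => by
      unfold List.Chain' at hc ⊢
      rw [List.isChain_cons_cons] at hc ⊢
      have ha := h1 a (by simp)
      have hb := h1 b (by simp)
      exact ⟨by tauto, chain'_alt_swap (b :: t) (fun e he => h1 e (by simp [he])) hc.2⟩

lemma even_cons_cons {α : Type*} {x y : α} {t : List α} (h : Even (x :: y :: t).length) :
    Even t.length := by
  simp only [List.length_cons, Nat.even_add_one, not_not] at h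
  exact h

lemma alt_head_getLast : ∀ (l : List (Sym2 V)) (a b : Sym2 V),
    l.head? = some a → l.getLast? = some b →
    List.Chain' (fun e f => ¬(e ∈ A ↔ f ∈ A)) l → Even l.length →
    ¬(a ∈ A ↔ b ∈ A)
  | [], a, b, ha, _, _, _ => by simp at ha
  | [x], a, b, ha, hb, _, hev => by simp at hev
  | x :: y :: t, a, b, ha, hb, hc, hev => by
      simp only [List.head?_cons, Option.some_inj] at ha
      subst ha
      unfold List.Chain' at hc
      rw [List.isChain_cons_cons] at hc
      cases t with
      | nil =>
        simp at hb; subst hb; exact hc.1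
      | cons z t' =>
        rw [List.isChain_cons_cons] at hc
        have hxz : x ∈ A ↔ z ∈ A := by tauto
        have hev' : Even (z :: t').length := by
          have := even_cons_cons hev
          simpa using this
        have hb' : (z :: t').getLast? = some b := by
          rw [List.getLast?_cons_cons, List.getLast?_cons_cons] at hb
          exact hb
        have := alt_head_getLast (z :: t') z b (by simp) hb' hc.2.2 hev'
        tauto

open Classical in
lemma alt_countP : ∀ (l : List (Sym2 V)),
    List.Chain' (fun e f => ¬(e ∈ A ↔ f ∈ A)) l → Even l.length →
    l.countP (fun e => decide (e ∈ A)) = l.countP (fun e => decide (e ∉ A))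
  | [], _, _ => rfl
  | [x], _, hev => by simp at hev
  | x :: y :: t, hc, hev => by
      unfold List.Chain' at hc
      rw [List.isChain_cons_cons] at hc
      have h2 := hc.2
      have ih := alt_countP t h2.tail (even_cons_cons hev)
      rw [List.countP_cons, List.countP_cons, List.countP_cons, List.countP_cons, ih]
      have hxy : ¬(x ∈ A ↔ y ∈ A) := hc.1
      by_cases hx : x ∈ A
      · have hy : y ∉ A := by tauto
        simp [hx, hy]
      · have hy : y ∈ A := by tauto
        simp [hx, hy]

open Classical in
lemma ncard_inter_mem_list (S : Set (Sym2 V)) (l : List (Sym2 V)) (hl : l.Nodup) :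
    (S ∩ {e | e ∈ l}).ncard = l.countP (fun e => decide (e ∈ S)) := by
  classical
  have h1 : (S ∩ {e | e ∈ l}) = ↑((l.filter (fun e => decide (e ∈ S))).toFinset) := by
    ext e
    simp [Set.mem_inter_iff, List.mem_filter, and_comm]
  rw [h1, Set.ncard_coe_finset, List.toFinset_card_of_nodup (hl.filter _),
    List.countP_eq_length_filter]

end ListLemmas

section ListLemmas

variable {A B : Set (Sym2 V)}


lemma altList_symm {l : List (Sym2 V)} (h : AltList A B l) : AltList B A l :=
  ⟨fun e he => (h.1 e he).symm, chain'_alt_swap l h.1 h.2⟩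

lemma isAltPath_symm {G : SimpleGraph V} {u v : V} {p : G.Walk u v}
    (h : IsAltPath G A B p) : IsAltPath G B A p :=
  ⟨h.1, h.2.1, altList_symm h.2.2⟩

lemma isMaxAltPath_symm {G : SimpleGraph V} {u v : V} {p : G.Walk u v}
    (h : IsMaxAltPath G A B p) : IsMaxAltPath G B A p :=
  ⟨isAltPath_symm h.1, fun w hw hc => h.2.1 w hw (isAltPath_symm hc),
   fun w hw hc => h.2.2 w hw (isAltPath_symm hc)⟩
end ListLemmas



section WalkLemmas
variable {G : SimpleGraph V} {A B : Set (Sym2 V)}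

lemma mem_support_of_edge {u v x : V} {p : G.Walk u v} {e : Sym2 V}
    (he : e ∈ p.edges) (hx : x ∈ e) : x ∈ p.support := by
  induction e with
  | _ a b =>
    rcases Sym2.mem_iff.mp hx with rfl | rfl
    · exact p.fst_mem_support_of_mem_edges he
    · exact p.snd_mem_support_of_mem_edges he

lemma first_edge {u v : V} (p : G.Walk u v) (hl : 0 < p.length) :
    ∃ e, p.edges.head? = some e ∧ u ∈ e ∧ e ∈ p.edges := by
  cases p with
  | nil => simp at hl
  | @cons _ w _ h q =>
    exact ⟨s(u, w), by simp, Sym2.mem_mk_left _ _, by simp⟩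

lemma last_edge {u v : V} (p : G.Walk u v) (hl : 0 < p.length) :
    ∃ e, p.edges.getLast? = some e ∧ v ∈ e ∧ e ∈ p.edges := by
  obtain ⟨e, h1, h2, h3⟩ := first_edge p.reverse (by simpa using hl)
  rw [SimpleGraph.Walk.edges_reverse, List.head?_reverse] at h1
  rw [SimpleGraph.Walk.edges_reverse, List.mem_reverse] at h3
  exact ⟨e, h1, h2, h3⟩

lemma edge_at_start {u v : V} {p : G.Walk u v} (hp : p.IsPath) {e : Sym2 V}
    (he : e ∈ p.edges) (hue : u ∈ e) : p.edges.head? = some e := by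
  cases p with
  | nil => simp at he
  | cons h q =>
    rw [SimpleGraph.Walk.edges_cons, List.mem_cons] at he
    rcases he with rfl | he
    · simp
    · exact absurd (mem_support_of_edge he hue)
        ((SimpleGraph.Walk.cons_isPath_iff _ _).mp hp).2

lemma edge_at_end {u v : V} {p : G.Walk u v} (hp : p.IsPath) {e : Sym2 V}
    (he : e ∈ p.edges) (hve : v ∈ e) : p.edges.getLast? = some e := by
  have := edge_at_start hp.reverse (by rwa [SimpleGraph.Walk.edges_reverse, List.mem_reverse]) hve
  rwa [SimpleGraph.Walk.edges_reverse, List.head?_reverse] at this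

/-- Every internal vertex of an alternating walk is covered by an `A`-edge and a `B`-edge. -/
lemma cover {u v : V} (p : G.Walk u v)
    (h1 : ∀ e ∈ p.edges, (e ∈ A ∧ e ∉ B) ∨ (e ∈ B ∧ e ∉ A))
    (h2 : List.Chain' (fun e f => ¬(e ∈ A ↔ f ∈ A)) p.edges) :
    ∀ x ∈ p.support, x ≠ u → x ≠ v →
      (∃ e ∈ p.edges, x ∈ e ∧ e ∈ A) ∧ (∃ e ∈ p.edges, x ∈ e ∧ e ∈ B) := by
  induction p with
  | nil =>
    intro x hx hxu _
    simp only [SimpleGraph.Walk.support_nil, List.mem_singleton] at hx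
    exact absurd hx hxu
  | @cons u u' v huu' q ih =>
    intro x hx hxu hxv
    rw [SimpleGraph.Walk.support_cons, List.mem_cons] at hx
    rcases hx with rfl | hxq
    · exact absurd rfl hxu
    rw [SimpleGraph.Walk.edges_cons] at h1 h2
    by_cases hxu' : x = u'
    · subst hxu'
      cases q with
      | nil =>
        exact absurd rfl hxv
      | @cons _ w _ hxw r =>
        unfold List.Chain' at h2
        rw [SimpleGraph.Walk.edges_cons, List.isChain_cons_cons] at h2
        have hm1 : s(u, x) ∈ s(u, x) :: (SimpleGraph.Walk.cons hxw r).edges :=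
          List.mem_cons_self
        have hm2 : s(x, w) ∈ s(u, x) :: (SimpleGraph.Walk.cons hxw r).edges :=
          List.mem_cons_of_mem _ (by rw [SimpleGraph.Walk.edges_cons]; exact List.mem_cons_self)
        have ha := h1 _ hm1
        have hb := h1 _ hm2
        have hx1 : x ∈ s(u, x) := Sym2.mem_mk_right _ _
        have hx2 : x ∈ s(x, w) := Sym2.mem_mk_left _ _
        have hrel := h2.1
        constructor
        · by_cases hA : s(u, x) ∈ A
          · exact ⟨s(u, x), hm1, hx1, hA⟩
          · exact ⟨s(x, w), hm2, hx2, by tauto⟩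
        · by_cases hB : s(u, x) ∈ B
          · exact ⟨s(u, x), hm1, hx1, hB⟩
          · exact ⟨s(x, w), hm2, hx2, by tauto⟩
    · have := ih (fun e he => h1 e (List.mem_cons_of_mem _ he)) h2.tail x hxq hxu' hxv
      exact ⟨let ⟨e, he, h⟩ := this.1; ⟨e, List.mem_cons_of_mem _ he, h⟩,
             let ⟨e, he, h⟩ := this.2; ⟨e, List.mem_cons_of_mem _ he, h⟩⟩

end WalkLemmas

end Helpers


section Swap
open SimpleGraph
variable {G : SimpleGraph V} {A B : Set (Sym2 V)}

lemma chain'_alt_reverse {l : List (Sym2 V)}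
    (h : List.Chain' (fun e f => ¬(e ∈ A ↔ f ∈ A)) l) :
    List.Chain' (fun e f => ¬(e ∈ A ↔ f ∈ A)) l.reverse := by
  unfold List.Chain' at h ⊢
  rw [List.isChain_reverse]
  exact h.imp (fun {a b} hab => by tauto)

/-- Key step for the path case: an `A`-edge outside a maximal even alternating path
cannot share a vertex with a `B`-edge of the path. -/
lemma swap_key_path {u v : V} {p : G.Walk u v}
    (hA : IsMatchingSet G A) (hB : IsMatchingSet G B) (hAB : Disjoint A B)
    (hmp : IsMaxAltPath G A B p) (hev : Even p.length) :
    ∀ e ∈ A, e ∉ p.edges → ∀ f ∈ B, f ∈ p.edges → ∀ x, ¬(x ∈ e ∧ x ∈ f) := by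
  obtain ⟨⟨hlen, hp, h1, h2⟩, hnu, hnv⟩ := hmp
  obtain ⟨e₁, hh1, hue1, he1mem⟩ := first_edge p hlen
  obtain ⟨eL, hhL, hveL, heLmem⟩ := last_edge p hlen
  have hcl : ¬(e₁ ∈ A ↔ eL ∈ A) :=
    alt_head_getLast p.edges e₁ eL hh1 hhL h2 (by rw [SimpleGraph.Walk.length_edges]; exact hev)
  intro e heA heC f hfB hfC x ⟨hxe, hxf⟩
  have hxsup : x ∈ p.support := mem_support_of_edge hfC hxf
  -- x cannot be an internal vertex
  have hinternal : ∀ y : V, y ∈ p.support → y ≠ u → y ≠ v → y ∈ e → False := by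
    intro y hys hyu hyv hye
    obtain ⟨⟨g, hg, hyg, hgA⟩, -⟩ := cover p h1 h2 y hys hyu hyv
    by_cases hge : e = g
    · exact heC (hge ▸ hg)
    · exact hA.2 e heA g hgA hge y ⟨hye, hyg⟩
  by_cases hxu : x = u
  · subst hxu
    -- f is the first edge, so the first edge is in B
    have hfe1 : f = e₁ := by
      have := edge_at_start hp hfC hxf
      rw [hh1] at this; exact (Option.some_inj.mp this).symm
    have he1B : e₁ ∈ B := hfe1 ▸ hfB
    have he1A : e₁ ∉ A := fun h => Set.disjoint_left.mp hAB h he1B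
    -- extend the path at u with e
    obtain ⟨w, rfl⟩ := Sym2.mem_iff_exists.mp hxe
    have hadj : G.Adj x w := hA.1 heA
    have hwnot : w ∉ p.support := by
      intro hws
      have hwu : w ≠ x := fun h => G.irrefl (h ▸ hadj)
      by_cases hwv : w = v
      · subst hwv
        have heLA : eL ∈ A := by tauto
        by_cases hgeq : s(x, w) = eL
        · exact heC (hgeq ▸ heLmem)
        · exact hA.2 _ heA eL heLA hgeq w ⟨Sym2.mem_mk_right _ _, hveL⟩
      · exact hinternal w hws hwu hwv (Sym2.mem_mk_right _ _)
    apply hnu w hadj.symm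
    refine ⟨by simp, hp.cons hwnot, ?_, ?_⟩
    · intro g hg
      rw [SimpleGraph.Walk.edges_cons, List.mem_cons] at hg
      rcases hg with rfl | hg
      · exact Or.inl ⟨Sym2.eq_swap ▸ heA, fun h => Set.disjoint_left.mp hAB (Sym2.eq_swap ▸ heA) h⟩
      · exact h1 g hg
    · rw [SimpleGraph.Walk.edges_cons]
      unfold List.Chain'
      rw [List.isChain_cons]
      refine ⟨?_, h2⟩
      intro y hy
      rw [hh1, Option.mem_some_iff] at hy
      subst hy
      have : s(w, x) ∈ A := Sym2.eq_swap ▸ heA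
      tauto
  · by_cases hxv : x = v
    · subst hxv
      have hfeL : f = eL := by
        have := edge_at_end hp hfC hxf
        rw [hhL] at this; exact (Option.some_inj.mp this).symm
      have heLB : eL ∈ B := hfeL ▸ hfB
      have heLA : eL ∉ A := fun h => Set.disjoint_left.mp hAB h heLB
      have he1A : e₁ ∈ A := by tauto
      obtain ⟨w, rfl⟩ := Sym2.mem_iff_exists.mp hxe
      have hadj : G.Adj x w := hA.1 heA
      have hwnot : w ∉ p.support := by
        intro hws
        have hwvne : w ≠ x := fun h => G.irrefl (h ▸ hadj)
        by_cases hwu : w = u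
        · subst hwu
          by_cases hgeq : s(x, w) = e₁
          · exact heC (hgeq ▸ he1mem)
          · exact hA.2 _ heA e₁ he1A hgeq w ⟨Sym2.mem_mk_right _ _, hue1⟩
        · exact hinternal w hws hwu hwvne (Sym2.mem_mk_right _ _)
      apply hnv w hadj.symm
      have hwnotrev : w ∉ p.reverse.support := by
        rwa [SimpleGraph.Walk.support_reverse, List.mem_reverse]
      refine ⟨by simp, hp.reverse.cons hwnotrev, ?_, ?_⟩
      · intro g hg
        rw [SimpleGraph.Walk.edges_cons, SimpleGraph.Walk.edges_reverse, List.mem_cons,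
          List.mem_reverse] at hg
        rcases hg with rfl | hg
        · exact Or.inl ⟨Sym2.eq_swap ▸ heA, fun h => Set.disjoint_left.mp hAB (Sym2.eq_swap ▸ heA) h⟩
        · exact h1 g hg
      · rw [SimpleGraph.Walk.edges_cons, SimpleGraph.Walk.edges_reverse]
        unfold List.Chain'
        rw [List.isChain_cons]
        refine ⟨?_, chain'_alt_reverse h2⟩
        intro y hy
        rw [List.head?_reverse, hhL, Option.mem_some_iff] at hy
        subst hy
        have : s(w, x) ∈ A := Sym2.eq_swap ▸ heA
        tauto
    · exact hinternal x hxsup hxu hxv hxe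

/-- Key step for the cycle case. -/
lemma swap_key_cycle {u : V} {w : G.Walk u u}
    (hA : IsMatchingSet G A) (hB : IsMatchingSet G B)
    (hc : w.IsCycle) (halt : AltList A B w.edges) (hev : Even w.length) :
    ∀ e ∈ A, e ∉ w.edges → ∀ f ∈ B, f ∈ w.edges → ∀ x, ¬(x ∈ e ∧ x ∈ f) := by
  obtain ⟨h1, h2⟩ := halt
  have hlen : 0 < w.length := by have := hc.three_le_length; omega
  obtain ⟨e₁, hh1, hue1, he1mem⟩ := first_edge w hlen
  obtain ⟨eL, hhL, hveL, heLmem⟩ := last_edge w hlen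
  have hcl : ¬(e₁ ∈ A ↔ eL ∈ A) :=
    alt_head_getLast w.edges e₁ eL hh1 hhL h2 (by rw [SimpleGraph.Walk.length_edges]; exact hev)
  intro e heA heC f hfB hfC x ⟨hxe, hxf⟩
  have hxsup : x ∈ w.support := mem_support_of_edge hfC hxf
  have hgen : ∀ g, g ∈ w.edges → g ∈ A → x ∈ g → False := by
    intro g hg hgA hxg
    by_cases hge : e = g
    · exact heC (hge ▸ hg)
    · exact hA.2 e heA g hgA hge x ⟨hxe, hxg⟩
  by_cases hxu : x = u
  · subst hxu
    by_cases h1A : e₁ ∈ A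
    · exact hgen e₁ he1mem h1A hue1
    · exact hgen eL heLmem (by tauto) hveL
  · obtain ⟨⟨g, hg, hyg, hgA⟩, -⟩ := cover w h1 h2 x hxsup hxu hxu
    exact hgen g hg hgA hyg

/-- The swapped set is a matching. -/
lemma swap_isMatching {C : Set (Sym2 V)}
    (hA : IsMatchingSet G A) (hB : IsMatchingSet G B)
    (key : ∀ e ∈ A, e ∉ C → ∀ f ∈ B, f ∈ C → ∀ x, ¬(x ∈ e ∧ x ∈ f)) :
    IsMatchingSet G ((A \ C) ∪ (B ∩ C)) := by
  constructor
  · intro e he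
    rcases he with he | he
    · exact hA.1 he.1
    · exact hB.1 he.1
  · rintro e he f hf hef x ⟨hxe, hxf⟩
    rcases he with he | he <;> rcases hf with hf | hf
    · exact hA.2 e he.1 f hf.1 hef x ⟨hxe, hxf⟩
    · exact key e he.1 he.2 f hf.1 hf.2 x ⟨hxe, hxf⟩
    · exact key f hf.1 hf.2 e he.1 he.2 x ⟨hxf, hxe⟩
    · exact hB.2 e he.1 f hf.1 hef x ⟨hxe, hxf⟩

end Swap


section Master
open SimpleGraph
variable [Fintype V]

lemma ncard_split (S C : Set (Sym2 V)) : S.ncard = (S \ C).ncard + (S ∩ C).ncard := by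
  rw [← Set.ncard_union_eq (Set.disjoint_left.mpr (fun a ha hb => ha.2 hb.2))
    (Set.toFinite _) (Set.toFinite _), Set.diff_union_inter]

lemma master_count {G : SimpleGraph V} {M H H' : Set (Sym2 V)}
    (hmax : MaxIntersecting G M H H') (C : Set (Sym2 V))
    (hCsub : C ⊆ H ∪ H')
    (hHC : (H ∩ C).ncard = (H' ∩ C).ncard)
    (h2m : IsMatchingSet G ((H \ C) ∪ (H' ∩ C)))
    (h2m' : IsMatchingSet G ((H' \ C) ∪ (H ∩ C))) :
    ((H' ∩ M) ∩ C).ncard ≤ ((H ∩ M) ∩ C).ncard := by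
  obtain ⟨hM, ⟨hH, hH', hdisj, hlam, hmu⟩, hiii, hiv⟩ := hmax
  have hdisj' := Set.disjoint_left.mp hdisj
  set H₂ : Set (Sym2 V) := (H \ C) ∪ (H' ∩ C) with hH₂def
  set H₂' : Set (Sym2 V) := (H' \ C) ∪ (H ∩ C) with hH₂'def
  have hd2 : Disjoint (H \ C) (H' ∩ C) :=
    Set.disjoint_left.mpr (fun a ha hb => hdisj' ha.1 hb.1)
  have hd2' : Disjoint (H' \ C) (H ∩ C) :=
    Set.disjoint_left.mpr (fun a ha hb => hdisj' hb.1 ha.1)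
  have hc2 : H₂.ncard = H.ncard := by
    rw [hH₂def, Set.ncard_union_eq hd2 (Set.toFinite _) (Set.toFinite _), ← hHC,
      ← ncard_split]
  have hc2' : H₂'.ncard = H'.ncard := by
    rw [hH₂'def, Set.ncard_union_eq hd2' (Set.toFinite _) (Set.toFinite _), hHC,
      ← ncard_split]
  have hunion : H₂ ∪ H₂' = H ∪ H' := by
    ext x
    have hx := fun hx : x ∈ C => hCsub hx
    simp only [hH₂def, hH₂'def, Set.mem_union, Set.mem_diff, Set.mem_inter_iff] at *
    by_cases hxC : x ∈ C <;> tauto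
  have hdisj2 : Disjoint H₂ H₂' := by
    rw [Set.disjoint_left]
    rintro a (ha | ha) (hb | hb)
    · exact hdisj' ha.1 hb.1
    · exact ha.2 hb.2
    · exact hb.2 ha.2
    · exact hdisj' hb.1 ha.1
  have hpair : IsLambdaMuPair G H₂ H₂' := by
    refine ⟨h2m, h2m', hdisj2, ?_, ?_⟩
    · rw [hc2, hc2']; exact hlam
    · rw [hc2]; exact hmu
  have hiiieq : (M ∩ (H₂ ∪ H₂')).ncard = (M ∩ (H ∪ H')).ncard := by rw [hunion]
  have hle : (M ∩ H₂).ncard ≤ (M ∩ H).ncard := hiv M H₂ H₂' ⟨hM.1, hM.2⟩ hpair hiiieq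
  have hMH₂ : M ∩ H₂ = ((M ∩ H) \ C) ∪ ((M ∩ H') ∩ C) := by
    ext x
    simp only [hH₂def, Set.mem_union, Set.mem_diff, Set.mem_inter_iff]
    tauto
  have hdm : Disjoint ((M ∩ H) \ C) ((M ∩ H') ∩ C) :=
    Set.disjoint_left.mpr (fun a ha hb => hdisj' ha.1.2 hb.1.2)
  have e1 : (M ∩ H₂).ncard = ((M ∩ H) \ C).ncard + ((M ∩ H') ∩ C).ncard := by
    rw [hMH₂, Set.ncard_union_eq hdm (Set.toFinite _) (Set.toFinite _)]
  have e2 : (M ∩ H).ncard = ((M ∩ H) \ C).ncard + ((M ∩ H) ∩ C).ncard := ncard_split _ _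
  have goal' : ((M ∩ H') ∩ C).ncard ≤ ((M ∩ H) ∩ C).ncard := by omega
  rw [Set.inter_comm H' M, Set.inter_comm H M]
  exact goal'

end Master

/-- For maximally intersecting matchings `M`, `H`, `H'` of a finite connected
graph `G`, on every maximal `H`-`H'` alternating chain (a cycle, or a maximal alternating
path) with an even number of edges, the number of edges lying in `H ∩ M` is at least the
number of edges lying in `H' ∩ M`. -/
theorem stmt_15 [Fintype V] (G : SimpleGraph V) (hconn : G.Connected)
    (M H H' : Set (Sym2 V)) (hmax : MaxIntersecting G M H H') :
    (∀ (v : V) (w : G.Walk v v), w.IsCycle → AltList H H' w.edges → Even w.length →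
      ((H' ∩ M) ∩ {e | e ∈ w.edges}).ncard ≤ ((H ∩ M) ∩ {e | e ∈ w.edges}).ncard) ∧
    (∀ (u v : V) (p : G.Walk u v), IsMaxAltPath G H H' p → Even p.length →
      ((H' ∩ M) ∩ {e | e ∈ p.edges}).ncard ≤ ((H ∩ M) ∩ {e | e ∈ p.edges}).ncard) := by
  classical
  have hH := hmax.2.1.1
  have hH' := hmax.2.1.2.1
  have hdisj := hmax.2.1.2.2.1
  have count_eq : ∀ l : List (Sym2 V), l.Nodup → AltList H H' l → Even l.length →
      (H ∩ {e | e ∈ l}).ncard = (H' ∩ {e | e ∈ l}).ncard := by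
    intro l hnd ⟨h1, h2⟩ hev
    rw [ncard_inter_mem_list H l hnd, ncard_inter_mem_list H' l hnd]
    rw [alt_countP l h2 hev]
    refine List.countP_congr ?_
    intro e he
    have h := h1 e he
    simp only [decide_eq_true_eq]
    rcases h with ⟨ha, hb⟩ | ⟨ha, hb⟩
    · exact ⟨fun hn => absurd ha hn, fun hc => absurd hc hb⟩
    · exact ⟨fun _ => ha, fun _ => hb⟩
  constructor
  · intro v w hc halt hev
    have hnd : w.edges.Nodup := hc.isCircuit.isTrail.edges_nodup
    exact master_count hmax {e | e ∈ w.edges}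
      (by intro e he
          rcases halt.1 e he with h | h
          · exact Or.inl h.1
          · exact Or.inr h.1)
      (count_eq w.edges hnd halt (by rw [SimpleGraph.Walk.length_edges]; exact hev))
      (swap_isMatching hH hH' (swap_key_cycle hH hH' hc halt hev))
      (swap_isMatching hH' hH (swap_key_cycle hH' hH hc (altList_symm halt) hev))
  · intro u v p hmp hev
    have hnd : p.edges.Nodup := hmp.1.2.1.isTrail.edges_nodup
    have halt : AltList H H' p.edges := hmp.1.2.2
    exact master_count hmax {e | e ∈ p.edges}
      (by intro e he
          rcases halt.1 e he with h | h
          · exact Or.inl h.1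
          · exact Or.inr h.1)
      (count_eq p.edges hnd halt (by rw [SimpleGraph.Walk.length_edges]; exact hev))
      (swap_isMatching hH hH' (swap_key_path hH hH' hdisj hmp hev))
      (swap_isMatching hH' hH (swap_key_path hH' hH hdisj.symm (isMaxAltPath_symm hmp) hev))
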